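/- arXiv:2510.05333 — 4 statements merged into one kernel-verified Lean document; each statement's English description precedes it below -/
import Mathlib

section
/- Let 0 < δ ≤ π/4 and let z be a complex number with z ≠ 1, 1 − δ < |z| ≤ 1, and |arg z| < δ. Then there exists a natural number k such that (1−δ)² < |z^(2^k)| ≤ 1, |arg(z^(2^k))| ≤ 2δ, and moreover z^(2^k) fails at least one of the two conditions '1 − δ < |z^(2^k)|' and '|arg(z^(2^k))| < δ'. -/
theorem stmt_3 (δ : ℝ) (hδ0 : 0 < δ) (hδ : δ ≤ Real.pi / 4) (z : ℂ) (hz1 : z ≠ 1)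
    (hlo : 1 - δ < ‖z‖) (hhi : ‖z‖ ≤ 1) (harg : |Complex.arg z| < δ) :
    ∃ k : ℕ, (1 - δ) ^ 2 < ‖z ^ (2 ^ k)‖ ∧ ‖z ^ (2 ^ k)‖ ≤ 1 ∧
      |Complex.arg (z ^ (2 ^ k))| ≤ 2 * δ ∧
      ¬(1 - δ < ‖z ^ (2 ^ k)‖ ∧ |Complex.arg (z ^ (2 ^ k))| < δ) := by
  have hpi : Real.pi ≤ 3.15 := le_of_lt Real.pi_lt_d2
  have hδ1 : δ < 1 := by nlinarith
  have hz0 : z ≠ 0 := by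
    intro h
    rw [h] at hlo
    simp at hlo
    linarith
  -- the escape predicate
  set P : ℕ → Prop := fun k => 1 - δ < ‖z ^ (2 ^ k)‖ ∧ |Complex.arg (z ^ (2 ^ k))| < δ
    with hP
  have hP0 : P 0 := by simpa [hP] using ⟨hlo, harg⟩
  -- Step 1: some k fails P
  have hex : ∃ k, ¬ P k := by
    by_contra h
    push_neg at h
    rcases lt_or_eq_of_le hhi with hlt | heq
    · -- |z| < 1 : modulus shrinks to 0
      obtain ⟨n, hn⟩ := exists_pow_lt_of_lt_one (x := 1 - δ) (y := ‖z‖) (by linarith) hlt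
      have hle : ‖z‖ ^ (2 ^ n) ≤ ‖z‖ ^ n :=
        pow_le_pow_of_le_one (norm_nonneg z) hhi (Nat.le_of_lt (Nat.lt_two_pow_self (n := n)))
      have := (h n).1
      rw [norm_pow] at this
      linarith
    · -- |z| = 1 : argument doubles
      have hargne : Complex.arg z ≠ 0 := by
        intro h0
        apply hz1
        apply Complex.ext_norm_arg
        · simp [← heq]
        · simp [h0]
      have hargpos : 0 < |Complex.arg z| := abs_pos.mpr hargne
      have key : ∀ k, Complex.arg (z ^ (2 ^ k)) = 2 ^ k * Complex.arg z := by
        intro k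
        induction k with
        | zero => simp
        | succ k ih =>
          have hk := (h k).2
          have hzp : z ^ (2 ^ k) ≠ 0 := pow_ne_zero _ hz0
          have habs : |Complex.arg (z ^ (2 ^ k))| < δ := hk
          have h2 : z ^ (2 ^ (k + 1)) = z ^ (2 ^ k) * z ^ (2 ^ k) := by
            rw [← pow_add]
            ring_nf
          rw [h2, Complex.arg_mul hzp hzp]
          · rw [ih]; ring
          · constructor
            · have := abs_lt.mp habs
              nlinarith [Real.pi_gt_three]
            · have := abs_lt.mp habs
              nlinarith [Real.pi_gt_three]
      obtain ⟨k, hk⟩ := pow_unbounded_of_one_lt (R := ℝ) (y := 2) (δ / |Complex.arg z|)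
        one_lt_two
      have hPk := (h k).2
      rw [key k, abs_mul, abs_pow, abs_two] at hPk
      rw [div_lt_iff₀ hargpos] at hk
      linarith
  -- Step 2: minimal failing k
  classical
  let k0 := Nat.find hex
  have hk0 : ¬ P k0 := Nat.find_spec hex
  have hk0ne : k0 ≠ 0 := by
    intro h
    exact hk0 (h ▸ hP0)
  obtain ⟨m, hm⟩ := Nat.exists_eq_succ_of_ne_zero hk0ne
  have hPm : P m := by
    by_contra hc
    have h1 : Nat.find hex ≤ m := Nat.find_le hc
    have h2 : Nat.find hex = m + 1 := hm
    omega
  obtain ⟨hm1, hm2⟩ := hPm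
  refine ⟨k0, ?_, ?_, ?_, hk0⟩
  all_goals
    have h2 : z ^ (2 ^ k0) = z ^ (2 ^ m) * z ^ (2 ^ m) := by
      rw [hm, pow_succ, pow_mul, sq]
  · rw [h2, norm_mul]
    have h0 : (0:ℝ) ≤ 1 - δ := by linarith
    calc (1 - δ) ^ 2 = (1 - δ) * (1 - δ) := by ring
    _ < ‖z ^ (2 ^ m)‖ * ‖z ^ (2 ^ m)‖ := by
        apply mul_lt_mul' (le_of_lt hm1) hm1 h0
        exact lt_of_le_of_lt h0 hm1
  · rw [h2, norm_mul]
    have := norm_nonneg (z ^ (2 ^ m))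
    have hle1 : ‖z ^ (2 ^ m)‖ ≤ 1 := by
      rw [norm_pow]
      exact pow_le_one₀ (norm_nonneg z) hhi
    nlinarith
  · have hzp : z ^ (2 ^ m) ≠ 0 := pow_ne_zero _ hz0
    rw [h2, Complex.arg_mul hzp hzp]
    · rw [abs_le]
      have := abs_lt.mp hm2
      constructor <;> linarith
    · have := abs_lt.mp hm2
      constructor
      · nlinarith [Real.pi_gt_three]
      · nlinarith [Real.pi_gt_three]
end

section
/- Let (X, μ) be a probability space and n a natural number. For a bounded measurable function f : (Fin (n+1) → X) → ℝ define (δf)(x) = ∑_{i : Fin (n+2)} (−1)^i · f(x ∘ Fin.succAbove i) and (hf)(y) = ∫ f(Fin.cons t y) dμ(t). Then δ(hf) + h(δf) = f, i.e. integration over the first variable against μ is a contracting homotopy for the homogeneous cochain complex of bounded measurable functions. -/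
open MeasureTheory

theorem stmt_9 {X : Type*} [MeasurableSpace X] (μ : Measure X) [IsProbabilityMeasure μ]
    (n : ℕ) (f : (Fin (n + 1) → X) → ℝ) (hmeas : Measurable f)
    (M : ℝ) (hbdd : ∀ x, |f x| ≤ M) (x : Fin (n + 1) → X) :
    (∑ i : Fin (n + 1), (-1 : ℝ) ^ (i : ℕ) *
        (fun y : Fin n → X => ∫ t, f (Fin.cons t y) ∂μ) (x ∘ i.succAbove)) +
      (∫ t, (∑ i : Fin (n + 2), (-1 : ℝ) ^ (i : ℕ) * f (Fin.cons t x ∘ i.succAbove)) ∂μ) =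
      f x := by
  have hint : ∀ y : Fin n → X, Integrable (fun t => f (Fin.cons t y)) μ := by
    intro y
    have hm : Measurable (fun t : X => f (Fin.cons t y)) := by
      apply hmeas.comp
      refine measurable_pi_iff.2 (fun i => ?_)
      refine Fin.cases ?_ (fun j => ?_) i
      · simpa using measurable_id'
      · simpa using measurable_const
    exact (integrable_const M).mono' hm.aestronglyMeasurable
      (ae_of_all _ fun t => by simpa using hbdd (Fin.cons t y))
  have hcomp : ∀ (i : Fin (n + 2)) (t : X), Fin.cons t x ∘ i.succAbove =
      Fin.cases x (fun j => Fin.cons t (x ∘ j.succAbove)) i := by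
    intro i t
    refine Fin.cases ?_ (fun j => ?_) i
    · funext k
      simp [Fin.succAbove]
    · funext k
      refine Fin.cases ?_ (fun m => ?_) k
      · simp [Fin.succ_succAbove_zero]
      · simp [Fin.succ_succAbove_succ]
  have hint2 : ∀ i : Fin (n + 2),
      Integrable (fun t => (-1 : ℝ) ^ (i : ℕ) * f (Fin.cons t x ∘ i.succAbove)) μ := by
    intro i
    refine Integrable.const_mul ?_ _
    refine Fin.cases ?_ (fun j => ?_) i
    · simp only [fun t => hcomp 0 t]
      simpa using (integrable_const (f x))
    · simp only [fun t => hcomp j.succ t]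
      simpa using hint (x ∘ j.succAbove)
  rw [integral_finset_sum _ (fun i _ => hint2 i)]
  have key : (∑ i : Fin (n + 2), ∫ t, (-1 : ℝ) ^ (i : ℕ) * f (Fin.cons t x ∘ i.succAbove) ∂μ)
      = f x - ∑ j : Fin (n + 1), (-1 : ℝ) ^ (j : ℕ) * ∫ t, f (Fin.cons t (x ∘ j.succAbove)) ∂μ := by
    rw [Fin.sum_univ_succ]
    have h0 : (∫ t, (-1 : ℝ) ^ ((0 : Fin (n + 2)) : ℕ) *
        f (Fin.cons t x ∘ (0 : Fin (n+2)).succAbove) ∂μ) = f x := by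
      simp only [fun t => hcomp 0 t]
      simp
    rw [h0]
    have hs : ∀ j : Fin (n + 1),
        (∫ t, (-1 : ℝ) ^ ((j.succ : Fin (n + 2)) : ℕ) * f (Fin.cons t x ∘ j.succ.succAbove) ∂μ)
        = -((-1 : ℝ) ^ (j : ℕ) * ∫ t, f (Fin.cons t (x ∘ j.succAbove)) ∂μ) := by
      intro j
      simp only [fun t => hcomp j.succ t]
      rw [integral_const_mul]
      simp only [Fin.cases_succ, Fin.val_succ, pow_succ]
      ring
    simp only [hs, Finset.sum_neg_distrib]
    ring
  rw [key]
  simp only []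
  ring
end

section
/- Let F : ℝ → ℝ satisfy F(1/x) = −F(x) and F(1 − x) = −F(x) for all x ∉ {0, 1}. If there exists M such that |F(y)| ≤ M for all y ∈ [1/2, 2] with y ≠ 1, then |F(x)| ≤ M for all x ∉ {0, 1}. -/
theorem stmt_13 (F : ℝ → ℝ)
    (hinv : ∀ x : ℝ, x ≠ 0 → x ≠ 1 → F (1 / x) = -F x)
    (hsub : ∀ x : ℝ, x ≠ 0 → x ≠ 1 → F (1 - x) = -F x)
    (M : ℝ) (hM : ∀ y ∈ Set.Icc (1/2 : ℝ) 2, y ≠ 1 → |F y| ≤ M) :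
    ∀ x : ℝ, x ≠ 0 → x ≠ 1 → |F x| ≤ M := by
  intro x hx0 hx1
  rcases le_or_gt x 0 with hneg | hpos
  · have hneg : x < 0 := lt_of_le_of_ne hneg hx0
    rcases le_or_gt (-1) x with h1 | h1
    · -- -1 ≤ x < 0 : use 1 - x ∈ (1, 2]
      have h := hsub x hx0 hx1
      have : |F x| = |F (1 - x)| := by rw [h, abs_neg]
      rw [this]
      exact hM (1 - x) ⟨by linarith, by linarith⟩ (by intro hc; apply hx0; linarith)
    · -- x < -1 : 1 - x > 2, use 1 - 1/(1-x) ∈ (1/2, 1)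
      set y : ℝ := 1 - x with hy
      have hy2 : (2:ℝ) < y := by simp [hy]; linarith
      have hy0 : y ≠ 0 := by positivity
      have hy1 : y ≠ 1 := by intro hc; linarith [hc ▸ hy2]
      have hiy0 : (1/y : ℝ) ≠ 0 := by positivity
      have hiylt : (1/y : ℝ) < 1/2 := by
        rw [div_lt_div_iff₀ (by linarith) (by norm_num)]; linarith
      have hiypos : (0:ℝ) < 1/y := by positivity
      have hiy1 : (1/y : ℝ) ≠ 1 := by linarith
      have e1 : F y = -F x := hsub x hx0 hx1
      have e2 : F (1/y) = -F y := hinv y hy0 hy1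
      have e3 : F (1 - 1/y) = -F (1/y) := hsub (1/y) hiy0 hiy1
      have : |F x| = |F (1 - 1/y)| := by rw [e3, e2, e1]; simp
      rw [this]
      exact hM (1 - 1/y) ⟨by linarith, by linarith⟩ (by intro hc; apply hiy0; linarith)
  · rcases lt_or_ge x (1/2) with h2 | h2
    · -- 0 < x < 1/2 : use 1 - x ∈ (1/2, 1)
      have h := hsub x hx0 hx1
      have : |F x| = |F (1 - x)| := by rw [h, abs_neg]
      rw [this]
      exact hM (1 - x) ⟨by linarith, by linarith⟩ (by intro hc; apply hx0; linarith)
    · rcases le_or_gt x 2 with h3 | h3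
      · exact hM x ⟨h2, h3⟩ hx1
      · -- x > 2 : use 1 - 1/x ∈ (1/2, 1)
        have hix0 : (1/x : ℝ) ≠ 0 := by positivity
        have hixlt : (1/x : ℝ) < 1/2 := by
          rw [div_lt_div_iff₀ (by linarith) (by norm_num)]; linarith
        have hixpos : (0:ℝ) < 1/x := by positivity
        have hix1 : (1/x : ℝ) ≠ 1 := by linarith
        have e2 : F (1/x) = -F x := hinv x hx0 hx1
        have e3 : F (1 - 1/x) = -F (1/x) := hsub (1/x) hix0 hix1
        have : |F x| = |F (1 - 1/x)| := by rw [e3, e2]; simp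
        rw [this]
        exact hM (1 - 1/x) ⟨by linarith, by linarith⟩ (by intro hc; apply hix0; linarith)
end

section
/- Let α be a type, g : α → α, S and T subsets of α with the following properties for constants C, M ≥ 0 and a function F : α → ℝ: (i) for every z ∈ S, |2·F(z) − F(g(z))| ≤ C; (ii) for every z ∈ S there exists k such that g^[j](z) ∈ S for all j < k and g^[k](z) ∈ T \ S; (iii) |F(w)| ≤ M for all w ∈ T \ S. Then |F(z)| ≤ M + C for every z ∈ S. -/
theorem stmt_14 {α : Type*} (g : α → α) (S T : Set α) (C M : ℝ) (hC : 0 ≤ C) (hM : 0 ≤ M)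
    (F : α → ℝ)
    (h1 : ∀ z ∈ S, |2 * F z - F (g z)| ≤ C)
    (h2 : ∀ z ∈ S, ∃ k : ℕ, (∀ j < k, g^[j] z ∈ S) ∧ g^[k] z ∈ T \ S)
    (h3 : ∀ w ∈ T \ S, |F w| ≤ M) :
    ∀ z ∈ S, |F z| ≤ M + C := by
  have aux : ∀ k : ℕ, ∀ z : α, (∀ j < k, g^[j] z ∈ S) →
      |2 ^ k * F z - F (g^[k] z)| ≤ (2 ^ k - 1) * C := by
    intro k
    induction k with
    | zero => intro z _; simp
    | succ k ih =>
      intro z hz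
      have hz0 : z ∈ S := by simpa using hz 0 (Nat.succ_pos k)
      have hgz : ∀ j < k, g^[j] (g z) ∈ S := by
        intro j hj
        have := hz (j + 1) (by omega)
        simpa [Function.iterate_succ_apply] using this
      have hIH := ih (g z) hgz
      have h1z := h1 z hz0
      have key : (2:ℝ) ^ (k+1) * F z - F (g^[k+1] z)
          = 2 ^ k * (2 * F z - F (g z)) + (2 ^ k * F (g z) - F (g^[k] (g z))) := by
        rw [Function.iterate_succ_apply]; ring
      calc |2 ^ (k+1) * F z - F (g^[k+1] z)|
          ≤ |2 ^ k * (2 * F z - F (g z))| + |2 ^ k * F (g z) - F (g^[k] (g z))| := by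
            rw [key]; exact abs_add_le _ _
        _ ≤ 2 ^ k * C + (2 ^ k - 1) * C := by
            gcongr
            rw [abs_mul, abs_of_nonneg (by positivity : (0:ℝ) ≤ 2 ^ k)]
            have : (0:ℝ) ≤ 2 ^ k := by positivity
            nlinarith [h1z]
        _ = (2 ^ (k+1) - 1) * C := by ring
  intro z hz
  obtain ⟨k, hk1, hk2⟩ := h2 z hz
  have h := aux k z hk1
  have hFk := h3 _ hk2
  have hpow : (0:ℝ) < 2 ^ k := by positivity
  have : |2 ^ k * F z| ≤ 2 ^ k * M + (2 ^ k - 1) * C := by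
    calc |2 ^ k * F z| ≤ |2 ^ k * F z - F (g^[k] z)| + |F (g^[k] z)| := by
          have := abs_sub_abs_le_abs_sub (2 ^ k * F z) (F (g^[k] z)); linarith [abs_add_le (2 ^ k * F z - F (g^[k] z)) (F (g^[k] z))]
      _ ≤ (2 ^ k - 1) * C + M := by gcongr
      _ ≤ 2 ^ k * M + (2 ^ k - 1) * C := by nlinarith [one_le_pow₀ (one_le_two : (1:ℝ) ≤ 2) (n := k)]
  rw [abs_mul, abs_of_nonneg hpow.le] at this
  have h2k1 : (1:ℝ) ≤ 2 ^ k := one_le_pow₀ one_le_two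
  nlinarith [abs_nonneg (F z)]
end
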